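/- Let M₁, M₃, M₄, M₅ be the 4×4 complex antisymmetric matrices with rows [[0,i,0,0],[−i,0,0,0],[0,0,0,i],[0,0,−i,0]], [[0,0,i,0],[0,0,0,−i],[−i,0,0,0],[0,i,0,0]], [[0,0,1,0],[0,0,0,1],[−1,0,0,0],[0,−1,0,0]], and [[0,0,0,i],[0,0,i,0],[0,−i,0,0],[−i,0,0,0]] respectively (the matrices of the 2-forms ω₁ = i e₁∧e₂ + i e₃∧e₄, ω₃ = i e₁∧e₃ − i e₂∧e₄, ω₄ = e₁∧e₃ + e₂∧e₄, ω₅ = i e₁∧e₄ + i e₂∧e₃ on ℂ⁴). Then a matrix U ∈ SU(4) = Matrix.specialUnitaryGroup (Fin 4) ℂ satisfies Uᵀ * Mᵢ * U = Mᵢ for all i ∈ {1, 3, 4, 5} if and only if there exist real numbers a, b with a² + b² = 1 such that U is the matrix with rows [[a,0,−b,0],[0,a,0,−b],[b,0,a,0],[0,b,0,a]] (i.e. the block matrix [[a·I₂, −b·I₂],[b·I₂, a·I₂]]). (This stabilizer subgroup of SU(4) is a circle group realizing Spin 2.) -/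

import Mathlib

open Matrix Complex

/-- The matrix of the 2-form `ω₁ = i e₁∧e₂ + i e₃∧e₄` on `ℂ⁴`. -/
noncomputable def M₁ : Matrix (Fin 4) (Fin 4) ℂ :=
  !![0, I, 0, 0; -I, 0, 0, 0; 0, 0, 0, I; 0, 0, -I, 0]

/-- The matrix of the 2-form `ω₃ = i e₁∧e₃ − i e₂∧e₄` on `ℂ⁴`. -/
noncomputable def M₃ : Matrix (Fin 4) (Fin 4) ℂ :=
  !![0, 0, I, 0; 0, 0, 0, -I; -I, 0, 0, 0; 0, I, 0, 0]

/-- The matrix of the 2-form `ω₄ = e₁∧e₃ + e₂∧e₄` on `ℂ⁴`. -/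
noncomputable def M₄ : Matrix (Fin 4) (Fin 4) ℂ :=
  !![0, 0, 1, 0; 0, 0, 0, 1; -1, 0, 0, 0; 0, -1, 0, 0]

/-- The matrix of the 2-form `ω₅ = i e₁∧e₄ + i e₂∧e₃` on `ℂ⁴`. -/
noncomputable def M₅ : Matrix (Fin 4) (Fin 4) ℂ :=
  !![0, 0, 0, I; 0, 0, I, 0; 0, -I, 0, 0; -I, 0, 0, 0]

lemma aux_M4_sq : M₄ * M₄ = -1 := by
  ext i j
  fin_cases i <;> fin_cases j <;>
    simp [M₄, Matrix.mul_apply, Fin.sum_univ_four, Matrix.one_apply,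
      Matrix.vecHead, Matrix.vecTail]

lemma aux_M4_T : M₄ᵀ = -M₄ := by
  ext i j
  fin_cases i <;> fin_cases j <;>
    simp [M₄, Matrix.vecHead, Matrix.vecTail]

lemma aux_comm1 : M₁ * M₄ = M₄ * M₁ := by
  ext i j
  fin_cases i <;> fin_cases j <;>
    simp [M₁, M₄, Matrix.mul_apply, Fin.sum_univ_four, Matrix.vecHead, Matrix.vecTail]

lemma aux_comm3 : M₃ * M₄ = M₄ * M₃ := by
  ext i j
  fin_cases i <;> fin_cases j <;>
    simp [M₃, M₄, Matrix.mul_apply, Fin.sum_univ_four, Matrix.vecHead, Matrix.vecTail]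

lemma aux_comm5 : M₅ * M₄ = M₄ * M₅ := by
  ext i j
  fin_cases i <;> fin_cases j <;>
    simp [M₅, M₄, Matrix.mul_apply, Fin.sum_univ_four, Matrix.vecHead, Matrix.vecTail]

lemma aux_conj (a b : ℝ) (h : (a:ℂ)^2 + (b:ℂ)^2 = 1) (M : Matrix (Fin 4) (Fin 4) ℂ)
    (hc : M * M₄ = M₄ * M) :
    (((a:ℂ) • 1 + (b:ℂ) • M₄) * M) * ((a:ℂ) • 1 - (b:ℂ) • M₄) = M := by
  have h6 : M₄ * (M₄ * M) = -M := by rw [← Matrix.mul_assoc, aux_M4_sq]; simp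
  simp only [Matrix.mul_add, Matrix.add_mul, Matrix.mul_sub, Matrix.sub_mul,
    smul_mul_assoc, mul_smul_comm, Matrix.one_mul, Matrix.mul_one, Matrix.mul_assoc,
    hc, h6, smul_smul, smul_neg]
  match_scalars <;> first | ring1 | linear_combination h

/-- A matrix `U ∈ SU(4)` stabilizes the four 2-forms `ω₁, ω₃, ω₄, ω₅` if and only if it
has the form `[[a·I₂, −b·I₂], [b·I₂, a·I₂]]` for some real `a, b` with `a² + b² = 1`.
This stabilizer is a circle group realizing `Spin 2`. -/
theorem stabilizer_omega1345_eq_circle (U : Matrix (Fin 4) (Fin 4) ℂ)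
    (hU : U ∈ Matrix.specialUnitaryGroup (Fin 4) ℂ) :
    (Uᵀ * M₁ * U = M₁ ∧ Uᵀ * M₃ * U = M₃ ∧ Uᵀ * M₄ * U = M₄ ∧ Uᵀ * M₅ * U = M₅) ↔
      ∃ a b : ℝ, a ^ 2 + b ^ 2 = 1 ∧
        U = !![(a : ℂ), 0, -(b : ℂ), 0;
               0, (a : ℂ), 0, -(b : ℂ);
               (b : ℂ), 0, (a : ℂ), 0;
               0, (b : ℂ), 0, (a : ℂ)] := by
  have hUu : U ∈ Matrix.unitaryGroup (Fin 4) ℂ := (Matrix.mem_specialUnitaryGroup_iff.mp hU).1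
  have h1 : U * Uᴴ = 1 := by
    have := Matrix.mem_unitaryGroup_iff.mp hUu; simpa [Matrix.star_eq_conjTranspose] using this
  have h2 : Uᴴ * U = 1 := by
    have := Matrix.mem_unitaryGroup_iff'.mp hUu; simpa [Matrix.star_eq_conjTranspose] using this
  constructor
  · rintro ⟨e1, e3, e4, e5⟩
    have hth : Uᵀᴴ = Uᴴᵀ := by ext i j; simp [Matrix.conjTranspose_apply]
    have hconj : Uᵀᴴ * Uᵀ = 1 := by
      have h2' : (U * Uᴴ)ᵀ = (1 : Matrix (Fin 4) (Fin 4) ℂ)ᵀ := by rw [h1]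
      rw [Matrix.transpose_mul, Matrix.transpose_one] at h2'
      rw [hth, h2']
    have key : ∀ M : Matrix (Fin 4) (Fin 4) ℂ, Uᵀ * M * U = M → M * U = Uᵀᴴ * M := by
      intro M e
      calc M * U = (Uᵀᴴ * Uᵀ) * (M * U) := by rw [hconj, one_mul]
      _ = Uᵀᴴ * (Uᵀ * M * U) := by noncomm_ring
      _ = Uᵀᴴ * M := by rw [e]
    have E1 := key _ e1
    have E3 := key _ e3
    have E4 := key _ e4
    have E5 := key _ e5
    have g2 := congrFun (congrFun h2 0) 0
    have a101 := congrFun (congrFun E1 0) 1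
    have a103 := congrFun (congrFun E1 0) 3
    have a121 := congrFun (congrFun E1 2) 1
    have a400 := congrFun (congrFun E4 0) 0
    have a402 := congrFun (congrFun E4 0) 2
    have a421 := congrFun (congrFun E4 2) 1
    have a423 := congrFun (congrFun E4 2) 3
    have a430 := congrFun (congrFun E4 3) 0
    have a432 := congrFun (congrFun E4 3) 2
    have a321 := congrFun (congrFun E3 2) 1
    have a323 := congrFun (congrFun E3 2) 3
    have a330 := congrFun (congrFun E3 3) 0
    have a332 := congrFun (congrFun E3 3) 2
    have a503 := congrFun (congrFun E5 0) 3
    have a512 := congrFun (congrFun E5 1) 2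
    have a510 := congrFun (congrFun E5 1) 0
    simp [Matrix.mul_apply, Fin.sum_univ_four, M₁, M₃, M₄, M₅,
      Matrix.conjTranspose_apply, Matrix.transpose_apply,
      Matrix.vecHead, Matrix.vecTail] at g2 a101 a103 a121 a400 a402 a421 a423 a430 a432 a321 a323 a330 a332 a503 a512 a510
    -- clean `I`-divided facts
    have b101 : U 1 1 = (starRingEnd ℂ) (U 0 0) :=
      mul_left_cancel₀ Complex.I_ne_zero (by linear_combination a101)
    have b103 : U 1 3 = (starRingEnd ℂ) (U 0 2) :=
      mul_left_cancel₀ Complex.I_ne_zero (by linear_combination a103)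
    have b121 : U 3 1 = (starRingEnd ℂ) (U 2 0) :=
      mul_left_cancel₀ Complex.I_ne_zero (by linear_combination a121)
    have b503 : U 3 3 = (starRingEnd ℂ) (U 0 0) :=
      mul_left_cancel₀ Complex.I_ne_zero (by linear_combination a503)
    have b512 : U 2 2 = (starRingEnd ℂ) (U 1 1) :=
      mul_left_cancel₀ Complex.I_ne_zero (by linear_combination a512)
    have b510 : U 2 0 = -(starRingEnd ℂ) (U 1 3) :=
      mul_left_cancel₀ Complex.I_ne_zero (by linear_combination a510)
    have b321 : U 0 1 = -(starRingEnd ℂ) (U 2 3) :=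
      mul_left_cancel₀ Complex.I_ne_zero (by linear_combination -a321)
    have b323 : U 0 3 = (starRingEnd ℂ) (U 2 1) :=
      mul_left_cancel₀ Complex.I_ne_zero (by linear_combination a323)
    have b330 : U 1 0 = -(starRingEnd ℂ) (U 3 2) :=
      mul_left_cancel₀ Complex.I_ne_zero (by linear_combination a330)
    have b332 : U 1 2 = (starRingEnd ℂ) (U 3 0) :=
      mul_left_cancel₀ Complex.I_ne_zero (by linear_combination a332)
    -- the eight parity-mismatched entries vanish
    have hz01 : U 0 1 = 0 := by linear_combination (a421 + b321) / 2
    have hz23 : U 2 3 = 0 := by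
      have : (starRingEnd ℂ) (U 2 3) = 0 := by linear_combination (b321 - a421) / 2
      simpa using congrArg (starRingEnd ℂ) this
    have hz03 : U 0 3 = 0 := by linear_combination (b323 - a423) / 2
    have hz21 : U 2 1 = 0 := by
      have : (starRingEnd ℂ) (U 2 1) = 0 := by linear_combination -(b323 + a423) / 2
      simpa using congrArg (starRingEnd ℂ) this
    have hz10 : U 1 0 = 0 := by linear_combination (a430 + b330) / 2
    have hz32 : U 3 2 = 0 := by
      have : (starRingEnd ℂ) (U 3 2) = 0 := by linear_combination (b330 - a430) / 2
      simpa using congrArg (starRingEnd ℂ) this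
    have hz12 : U 1 2 = 0 := by linear_combination (b332 - a432) / 2
    have hz30 : U 3 0 = 0 := by
      have : (starRingEnd ℂ) (U 3 0) = 0 := by linear_combination -(b332 + a432) / 2
      simpa using congrArg (starRingEnd ℂ) this
    -- the diagonal entries are all equal to a real number
    have h22 : U 2 2 = U 0 0 := by rw [b512, b101]; simp
    have hreal0 : (starRingEnd ℂ) (U 0 0) = U 0 0 := by rw [← a402, h22]
    have hA : ((U 0 0).re : ℂ) = U 0 0 := Complex.conj_eq_iff_re.mp hreal0
    -- the off-diagonal entries
    have h2002 : U 2 0 = -U 0 2 := by rw [b510, b103]; simp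
    have hw : (starRingEnd ℂ) (U 0 2) = U 0 2 := by linear_combination a400 - h2002
    have hreal2 : (starRingEnd ℂ) (U 2 0) = U 2 0 := by
      rw [a400]; simp [hw]
    have hB : ((U 2 0).re : ℂ) = U 2 0 := Complex.conj_eq_iff_re.mp hreal2
    have h00 : U 0 0 = ((U 0 0).re : ℂ) := hA.symm
    have h11 : U 1 1 = ((U 0 0).re : ℂ) := by rw [b101, hreal0]; exact hA.symm
    have h22' : U 2 2 = ((U 0 0).re : ℂ) := by rw [h22]; exact hA.symm
    have h33 : U 3 3 = ((U 0 0).re : ℂ) := by rw [b503, hreal0]; exact hA.symm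
    have h20 : U 2 0 = ((U 2 0).re : ℂ) := hB.symm
    have h31 : U 3 1 = ((U 2 0).re : ℂ) := by rw [b121, hreal2]; exact hB.symm
    have h02 : U 0 2 = -((U 2 0).re : ℂ) := by rw [hB]; linear_combination h2002
    have h13 : U 1 3 = -((U 2 0).re : ℂ) := by rw [b103, hw, h02]
    refine ⟨(U 0 0).re, (U 2 0).re, ?_, ?_⟩
    · have g2' : ((U 0 0).re : ℂ) ^ 2 + ((U 2 0).re : ℂ) ^ 2 = 1 := by
        rw [hA, hB]
        linear_combination g2 - U 0 0 * hreal0 - U 2 0 * hreal2 -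
          (starRingEnd ℂ) (U 1 0) * hz10 - (starRingEnd ℂ) (U 3 0) * hz30
      exact_mod_cast g2'
    · ext i j
      fin_cases i <;> fin_cases j <;>
        simp only [Matrix.cons_val', Matrix.cons_val_zero, Matrix.cons_val_one,
          Matrix.head_cons, Matrix.empty_val', Matrix.cons_val_fin_one, Matrix.head_fin_const,
          Matrix.of_apply, Matrix.cons_val_two, Matrix.cons_val_three,
          Matrix.vecHead, Matrix.vecTail, Fin.mk_zero, Fin.mk_one, Function.comp_apply,
          Fin.succ_zero_eq_one, Fin.succ_one_eq_two, Fin.isValue] <;>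
        first
          | exact h00 | exact h11 | exact h22' | exact h33
          | exact h20 | exact h31 | exact h02 | exact h13
          | exact hz01 | exact hz03 | exact hz10 | exact hz12
          | exact hz21 | exact hz23 | exact hz30 | exact hz32
  · rintro ⟨a, b, hab, rfl⟩
    have h : (a : ℂ) ^ 2 + (b : ℂ) ^ 2 = 1 := by
      exact_mod_cast congrArg (Complex.ofReal) hab
    have hU0 : (!![(a : ℂ), 0, -(b : ℂ), 0;
               0, (a : ℂ), 0, -(b : ℂ);
               (b : ℂ), 0, (a : ℂ), 0;
               0, (b : ℂ), 0, (a : ℂ)]) = (a:ℂ) • 1 - (b:ℂ) • M₄ := by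
      ext i j
      fin_cases i <;> fin_cases j <;>
        simp [M₄, Matrix.one_apply, Matrix.vecHead, Matrix.vecTail]
    have hT : ((a:ℂ) • (1:Matrix (Fin 4) (Fin 4) ℂ) - (b:ℂ) • M₄)ᵀ
        = (a:ℂ) • 1 + (b:ℂ) • M₄ := by
      rw [Matrix.transpose_sub, Matrix.transpose_smul, Matrix.transpose_smul,
        Matrix.transpose_one, aux_M4_T, smul_neg, sub_neg_eq_add]
    rw [hU0, hT]
    exact ⟨aux_conj a b h M₁ aux_comm1, aux_conj a b h M₃ aux_comm3,
      aux_conj a b h M₄ rfl, aux_conj a b h M₅ aux_comm5⟩
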